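/- Axiomatic characterization of complexity: let K' be a function from binary strings to ℕ such that (A1) for every partial computable function f from binary strings to binary strings there is a constant c with K'(f(x)) ≤ K'(x) + c whenever f(x) is defined; (A2) K' is upper semicomputable; (A3) there are real constants C ≥ c > 0 such that the number of strings x with K'(x) < n is at most C·2^n for all n, and at least c·2^n for all sufficiently large n. Then there is a constant d with |K'(x) − K(x)| ≤ d for all binary strings x. -/

import Mathlib

namespace AxCompAux

/-- binary value of a bit string (MSB first) -/
def valOf (l : List Bool) : ℕ := l.foldl (fun a b => 2 * a + cond b 1 0) 0

/-- the string of length `ℓ` with binary value `i` -/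
def natToBits (ℓ i : ℕ) : List Bool := (List.range ℓ).map fun t => Nat.testBit i (ℓ - 1 - t)

lemma valOf_append (l : List Bool) (b : Bool) :
    valOf (l ++ [b]) = 2 * valOf l + cond b 1 0 := by
  simp [valOf, List.foldl_append]

@[simp] lemma length_natToBits (ℓ i : ℕ) : (natToBits ℓ i).length = ℓ := by
  simp [natToBits]

lemma valOf_lt (l : List Bool) : valOf l < 2 ^ l.length := by
  induction l using List.reverseRecOn with
  | nil => simp [valOf]
  | append_singleton l b ih =>
      rw [valOf_append]
      have : cond b 1 0 ≤ 1 := by cases b <;> simp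
      simp only [List.length_append, List.length_singleton]
      have h2 : 2 * valOf l + cond b 1 0 < 2 * 2 ^ l.length := by omega
      calc 2 * valOf l + cond b 1 0 < 2 * 2 ^ l.length := h2
        _ = 2 ^ (l.length + 1) := by ring

lemma natToBits_succ (ℓ i : ℕ) :
    natToBits (ℓ + 1) i = natToBits ℓ (i / 2) ++ [Nat.testBit i 0] := by
  unfold natToBits
  rw [List.range_succ, List.map_append]
  congr 1
  · apply List.map_congr_left
    intro t ht
    rw [List.mem_range] at ht
    have h1 : ℓ + 1 - 1 - t = (ℓ - 1 - t) + 1 := by omega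
    rw [h1, Nat.testBit_succ]
  · simp

lemma valOf_natToBits {ℓ i : ℕ} (h : i < 2 ^ ℓ) : valOf (natToBits ℓ i) = i := by
  induction ℓ generalizing i with
  | zero => simp at h; simp [h, natToBits, valOf]
  | succ ℓ ih =>
      have hdiv : i / 2 < 2 ^ ℓ := by
        have h2 : (2:ℕ) ^ (ℓ+1) = 2 ^ ℓ * 2 := by ring
        rw [h2] at h
        exact Nat.div_lt_of_lt_mul (by omega)
      rw [natToBits_succ, valOf_append, ih hdiv]
      have hmod := Nat.div_add_mod i 2
      have hb : (cond (Nat.testBit i 0) 1 0) = i % 2 := by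
        rw [Nat.testBit_zero]
        rcases Nat.mod_two_eq_zero_or_one i with h2 | h2 <;> simp [h2]
      omega

lemma natToBits_valOf (l : List Bool) : natToBits l.length (valOf l) = l := by
  induction l using List.reverseRecOn with
  | nil => simp [natToBits]
  | append_singleton l b ih =>
      rw [List.length_append, List.length_singleton, natToBits_succ, valOf_append]
      have h1 : (2 * valOf l + cond b 1 0) / 2 = valOf l := by cases b <;> simp <;> omega
      have h2 : Nat.testBit (2 * valOf l + cond b 1 0) 0 = b := by
        rw [Nat.testBit_zero]
        cases b <;> simp <;> omega
      rw [h1, h2, ih]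

lemma primrec_valOf : Primrec valOf := by
  have h : Primrec fun (p : List Bool × (ℕ × Bool)) => 2 * p.2.1 + cond p.2.2 1 0 :=
    Primrec.nat_add.comp (Primrec.nat_mul.comp (.const 2) (Primrec.fst.comp .snd))
      (Primrec.cond (Primrec.snd.comp .snd) (.const 1) (.const 0))
  exact (Primrec.list_foldl .id (.const 0) h.to₂).of_eq fun l => rfl

lemma primrec_pow : Primrec₂ ((· ^ ·) : ℕ → ℕ → ℕ) := Primrec₂.unpaired'.mp Nat.Primrec.pow

lemma primrec_testBit : Primrec₂ Nat.testBit := by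
  have h : Primrec fun (p : ℕ × ℕ) => p.1 / 2 ^ p.2 % 2 :=
    Primrec.nat_mod.comp
      (Primrec.nat_div.comp Primrec.fst (primrec_pow.comp (.const 2) Primrec.snd)) (.const 2)
  have h2 : Primrec fun (p : ℕ × ℕ) => decide (p.1 / 2 ^ p.2 % 2 = 1) :=
    (PrimrecRel.comp Primrec.eq h (.const 1)).decide
  exact h2.to₂.of_eq fun i n => (Nat.testBit_eq_decide_div_mod_eq).symm

lemma primrec_natToBits : Primrec₂ natToBits := by
  have hg : Primrec₂ fun (p : ℕ × ℕ) (t : ℕ) => Nat.testBit p.2 (p.1 - 1 - t) :=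
    primrec_testBit.comp (Primrec.snd.comp .fst)
      (Primrec.nat_sub.comp
        (Primrec.nat_sub.comp (Primrec.fst.comp .fst) (.const 1)) .snd)
  exact (Primrec.list_map (Primrec.list_range.comp .fst) hg).to₂.of_eq fun ℓ i => rfl

open Nat.Partrec (Code)
open Nat.Partrec.Code

/-- Does stage `t = ⟨a, b, u⟩` certify (within `u` steps) that `k (decode a, b) < n`? -/
def hitAt (c : Code) (n t : ℕ) : Bool :=
  match evaln t.unpair.2.unpair.2 c (Nat.pair t.unpair.1 t.unpair.2.unpair.1) with
  | some v => decide (v < n)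
  | none => false

/-- No earlier stage hit with the same first component. -/
def freshAt (c : Code) (n t : ℕ) : Bool :=
  ((List.range t).filterMap fun t' =>
    if t'.unpair.1 = t.unpair.1 ∧ hitAt c n t' = true then some t' else none).length == 0

/-- The element emitted at stage `t` of the enumeration of `{x | K' x < n}`, if any. -/
def kemit (c : Code) (n t : ℕ) : Option (List Bool) :=
  (Encodable.decode t.unpair.1 : Option (List Bool)).bind fun x =>
    if Encodable.encode x = t.unpair.1 ∧ hitAt c n t = true ∧ freshAt c n t = true then some x
    else none

/-- First `s` stages of the enumeration of `{x | K' x < n}`. -/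
def kfound (c : Code) (n s : ℕ) : List (List Bool) := (List.range s).filterMap (kemit c n)

lemma freshAt_iff {c : Code} {n t : ℕ} :
    freshAt c n t = true ↔
      ∀ t' < t, ¬(t'.unpair.1 = t.unpair.1 ∧ hitAt c n t' = true) := by
  unfold freshAt
  rw [beq_iff_eq, List.length_eq_zero_iff, List.filterMap_eq_nil_iff]
  constructor
  · intro h t' ht' hcond
    have := h t' (List.mem_range.mpr ht')
    simp [hcond] at this
  · intro h t' ht'
    rw [List.mem_range] at ht'
    simp [h t' ht']

lemma kemit_eq_some {c : Code} {n t : ℕ} {x : List Bool} :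
    kemit c n t = some x ↔
      Encodable.encode x = t.unpair.1 ∧ hitAt c n t = true ∧ freshAt c n t = true := by
  unfold kemit
  constructor
  · intro h
    rcases hd : (Encodable.decode t.unpair.1 : Option (List Bool)) with _ | y
    · rw [hd] at h; simp at h
    · rw [hd] at h
      simp only [Option.bind_some] at h
      split at h
      · rename_i hcond
        obtain rfl : y = x := by simpa using h
        exact hcond
      · simp at h
  · rintro ⟨he, h1, h2⟩
    have hd : (Encodable.decode t.unpair.1 : Option (List Bool)) = some x := by
      rw [← he]; exact Encodable.encodek x
    rw [hd]
    simp [he, h1, h2]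

lemma kemit_inj {c : Code} {n t t' : ℕ} {x : List Bool}
    (h : kemit c n t = some x) (h' : kemit c n t' = some x) : t = t' := by
  rw [kemit_eq_some] at h h'
  by_contra hne
  rcases Nat.lt_or_ge t t' with hlt | hge
  · exact (freshAt_iff.mp h'.2.2) t hlt ⟨h.1 ▸ h'.1 ▸ rfl, h.2.1⟩
  · have hlt : t' < t := by omega
    exact (freshAt_iff.mp h.2.2) t' hlt ⟨h'.1 ▸ h.1 ▸ rfl, h'.2.1⟩

lemma kfound_mono {c : Code} {n : ℕ} {s s' : ℕ} (h : s ≤ s') :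
    kfound c n s <+: kfound c n s' := by
  obtain ⟨d, rfl⟩ := Nat.exists_eq_add_of_le h
  clear h
  induction d with
  | zero => exact List.prefix_refl _
  | succ d ih =>
      refine ih.trans ?_
      show kfound c n (s + d) <+: kfound c n (s + d + 1)
      unfold kfound
      rw [List.range_succ, List.filterMap_append]
      exact List.prefix_append _ _

lemma mem_kfound {c : Code} {n s : ℕ} {x : List Bool} :
    x ∈ kfound c n s ↔ ∃ t < s, kemit c n t = some x := by
  simp [kfound, List.mem_filterMap, List.mem_range]

lemma kfound_nodup (c : Code) (n s : ℕ) : (kfound c n s).Nodup :=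
  (List.nodup_range (n := s)).filterMap fun a a' b hb hb' =>
    kemit_inj (Option.mem_def.mp hb) (Option.mem_def.mp hb')

section Semantics

variable {c : Code} {k : List Bool × ℕ → ℕ}
variable (hc : ∀ (x : List Bool) (b : ℕ),
  eval c (Nat.pair (Encodable.encode x) b) = Part.some (k (x, b)))

include hc

lemma hitAt_sound {n t : ℕ} (h : hitAt c n t = true) (x : List Bool)
    (hx : Encodable.encode x = t.unpair.1) : k (x, t.unpair.2.unpair.1) < n := by
  unfold hitAt at h
  rcases hev : evaln t.unpair.2.unpair.2 c (Nat.pair t.unpair.1 t.unpair.2.unpair.1)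
    with _ | v
  · rw [hev] at h; simp at h
  · rw [hev] at h
    simp only [decide_eq_true_eq] at h
    have hs := evaln_sound (Option.mem_def.mpr hev)
    rw [← hx, hc x t.unpair.2.unpair.1] at hs
    rw [Part.mem_some_iff] at hs
    omega

lemma hitAt_complete {n : ℕ} {x : List Bool} {b : ℕ} (h : k (x, b) < n) :
    ∃ u, hitAt c n (Nat.pair (Encodable.encode x) (Nat.pair b u)) = true := by
  have hm : k (x, b) ∈ eval c (Nat.pair (Encodable.encode x) b) := by
    rw [hc]; exact Part.mem_some _
  obtain ⟨u, hu⟩ := evaln_complete.mp hm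
  refine ⟨u, ?_⟩
  unfold hitAt
  simp only [Nat.unpair_pair]
  rw [Option.mem_def.mp hu]
  simp [h]

lemma kfound_sound {n s : ℕ} {x : List Bool} (h : x ∈ kfound c n s) :
    ∃ b, k (x, b) < n := by
  rw [mem_kfound] at h
  obtain ⟨t, _, ht⟩ := h
  rw [kemit_eq_some] at ht
  exact ⟨t.unpair.2.unpair.1, hitAt_sound hc ht.2.1 x ht.1⟩

lemma kfound_complete {n : ℕ} {x : List Bool} {b : ℕ} (h : k (x, b) < n) :
    ∃ s, x ∈ kfound c n s := by
  obtain ⟨u, hu⟩ := hitAt_complete hc h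
  have hex : ∃ t, t.unpair.1 = Encodable.encode x ∧ hitAt c n t = true :=
    ⟨Nat.pair (Encodable.encode x) (Nat.pair b u), by simp [hu]⟩
  classical
  let t₁ := Nat.find hex
  obtain ⟨ht₁a, ht₁h⟩ := Nat.find_spec hex
  have hfresh : freshAt c n t₁ = true := by
    rw [freshAt_iff]
    intro t' ht' hcond
    exact Nat.find_min hex ht' ⟨hcond.1.trans ht₁a, hcond.2⟩
  refine ⟨t₁ + 1, mem_kfound.mpr ⟨t₁, Nat.lt_succ_self _, ?_⟩⟩
  rw [kemit_eq_some]
  exact ⟨ht₁a.symm, ht₁h, hfresh⟩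

end Semantics

section PrimrecLemmas

open Primrec

lemma primrec_hitAt (c : Code) : Primrec₂ (hitAt c) := by
  have e : Primrec fun p : ℕ × ℕ =>
      evaln p.2.unpair.2.unpair.2 c (Nat.pair p.2.unpair.1 p.2.unpair.2.unpair.1) := by
    have hu : Primrec fun p : ℕ × ℕ => p.2.unpair.2.unpair.2 :=
      Primrec.snd.comp (Primrec.unpair.comp (Primrec.snd.comp (Primrec.unpair.comp Primrec.snd)))
    have ha : Primrec fun p : ℕ × ℕ => p.2.unpair.1 :=
      Primrec.fst.comp (Primrec.unpair.comp Primrec.snd)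
    have hb : Primrec fun p : ℕ × ℕ => p.2.unpair.2.unpair.1 :=
      Primrec.fst.comp (Primrec.unpair.comp (Primrec.snd.comp (Primrec.unpair.comp Primrec.snd)))
    exact primrec_evaln.comp ((hu.pair (Primrec.const c)).pair (Primrec₂.natPair.comp ha hb))
  have hg : Primrec fun q : (ℕ × ℕ) × ℕ => decide (q.2 < q.1.1) :=
    (PrimrecRel.comp Primrec.nat_lt Primrec.snd (Primrec.fst.comp Primrec.fst)).decide
  exact (Primrec.option_casesOn e (Primrec.const false) hg.to₂).to₂.of_eq fun n t => by
    unfold hitAt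
    rcases hev : evaln t.unpair.2.unpair.2 c (Nat.pair t.unpair.1 t.unpair.2.unpair.1)
      with _ | v <;> simp [hev]

lemma primrec_freshAt (c : Code) : Primrec₂ (freshAt c) := by
  have hcond : PrimrecPred fun q : (ℕ × ℕ) × ℕ =>
      (q.2.unpair.1 = q.1.2.unpair.1 ∧ hitAt c q.1.1 q.2 = true) :=
    PrimrecPred.and
      (PrimrecRel.comp Primrec.eq (Primrec.fst.comp (Primrec.unpair.comp Primrec.snd))
        (Primrec.fst.comp (Primrec.unpair.comp (Primrec.snd.comp Primrec.fst))))
      (PrimrecRel.comp Primrec.eq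
        ((primrec_hitAt c).comp (Primrec.fst.comp Primrec.fst) Primrec.snd)
        (Primrec.const true))
  have hg : Primrec₂ fun (p : ℕ × ℕ) (t' : ℕ) =>
      if t'.unpair.1 = p.2.unpair.1 ∧ hitAt c p.1 t' = true then some t' else none :=
    (Primrec.ite hcond (Primrec.option_some.comp Primrec.snd) (Primrec.const none)).to₂
  have hfm : Primrec fun p : ℕ × ℕ => ((List.range p.2).filterMap fun t' =>
      if t'.unpair.1 = p.2.unpair.1 ∧ hitAt c p.1 t' = true then some t' else none) :=
    Primrec.listFilterMap (Primrec.list_range.comp Primrec.snd) hg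
  exact (Primrec.beq.comp (Primrec.list_length.comp hfm) (Primrec.const 0)).to₂

lemma primrec_kemit (c : Code) : Primrec₂ (kemit c) := by
  have hd : Primrec fun p : ℕ × ℕ => (Encodable.decode p.2.unpair.1 : Option (List Bool)) :=
    Primrec.decode.comp (Primrec.fst.comp (Primrec.unpair.comp Primrec.snd))
  have hcond : PrimrecPred fun q : (ℕ × ℕ) × List Bool =>
      (Encodable.encode q.2 = q.1.2.unpair.1 ∧ hitAt c q.1.1 q.1.2 = true ∧
        freshAt c q.1.1 q.1.2 = true) :=
    PrimrecPred.and
      (PrimrecRel.comp Primrec.eq (Primrec.encode.comp Primrec.snd)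
        (Primrec.fst.comp (Primrec.unpair.comp (Primrec.snd.comp Primrec.fst))))
      (PrimrecPred.and
        (PrimrecRel.comp Primrec.eq
          ((primrec_hitAt c).comp (Primrec.fst.comp Primrec.fst) (Primrec.snd.comp Primrec.fst))
          (Primrec.const true))
        (PrimrecRel.comp Primrec.eq
          ((primrec_freshAt c).comp (Primrec.fst.comp Primrec.fst) (Primrec.snd.comp Primrec.fst))
          (Primrec.const true)))
  have hg : Primrec₂ fun (p : ℕ × ℕ) (x : List Bool) =>
      if Encodable.encode x = p.2.unpair.1 ∧ hitAt c p.1 p.2 = true ∧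
          freshAt c p.1 p.2 = true then some x else none :=
    (Primrec.ite hcond (Primrec.option_some.comp Primrec.snd) (Primrec.const none)).to₂
  exact (Primrec.option_bind hd hg).to₂.of_eq fun n t => rfl

lemma primrec_kfound (c : Code) : Primrec₂ (kfound c) := by
  have hg : Primrec fun q : (ℕ × ℕ) × ℕ => kemit c q.1.1 q.2 :=
    (primrec_kemit c).comp (Primrec.fst.comp Primrec.fst) Primrec.snd
  exact (Primrec.listFilterMap (Primrec.list_range.comp Primrec.snd) hg.to₂).to₂

end PrimrecLemmas

/-- The decompressor witnessing `K ≤ K' + O(1)`. -/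
def decomp (c : Code) (m : ℕ) : List Bool →. List Bool :=
  fun p => Nat.rfindOpt fun s => (kfound c (p.length - m) s)[valOf p]?

lemma partrec_decomp (c : Code) (m : ℕ) : Partrec (decomp c m) := by
  have hin : Primrec₂ fun (p : List Bool) (s : ℕ) => (kfound c (p.length - m) s)[valOf p]? :=
    (Primrec.list_getElem?.comp
      ((primrec_kfound c).comp
        (Primrec.nat_sub.comp (Primrec.list_length.comp Primrec.fst) (Primrec.const m))
        Primrec.snd)
      (primrec_valOf.comp Primrec.fst)).to₂
  exact Partrec.rfindOpt hin.to_comp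

/-! ### floor log₂ and shortlex indexing -/

def logAux (x : ℕ) : ℕ :=
  (((List.range (x + 1)).filterMap fun ℓ => if 2 ^ ℓ ≤ x then some ℓ else none).length) - 1

lemma logAux_spec {m x : ℕ} (h1 : 2 ^ m ≤ x) (h2 : x < 2 ^ (m + 1)) : logAux x = m := by
  have hiff : ∀ ℓ, (2 ^ ℓ ≤ x ↔ ℓ ≤ m) := by
    intro ℓ
    constructor
    · intro hle
      by_contra hgt
      have : 2 ^ (m + 1) ≤ 2 ^ ℓ := Nat.pow_le_pow_right (by norm_num) (by omega)
      omega
    · intro hle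
      exact le_trans (Nat.pow_le_pow_right (by norm_num) hle) h1
  have hlen : ∀ n, (((List.range n).filterMap fun ℓ =>
      if 2 ^ ℓ ≤ x then some ℓ else none).length) = min n (m + 1) := by
    intro n
    induction n with
    | zero => simp
    | succ n ih =>
        rw [List.range_succ, List.filterMap_append, List.length_append, ih]
        by_cases hn : n ≤ m
        · have h3 := (hiff n).mpr hn
          simp [h3]; omega
        · have h3 : ¬ 2 ^ n ≤ x := fun hc => hn ((hiff n).mp hc)
          simp [h3]; omega
  have hmx : m < x + 1 := by
    have := Nat.lt_two_pow_self (n := m)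
    omega
  unfold logAux
  rw [hlen (x + 1)]
  omega

lemma logAux_eq_log {x : ℕ} (hx : x ≠ 0) : logAux x = Nat.log 2 x :=
  logAux_spec (Nat.pow_log_le_self 2 hx) (Nat.lt_pow_succ_log_self (by norm_num) x)

lemma primrec_logAux : Primrec logAux := by
  have hg : Primrec₂ fun (x : ℕ) (ℓ : ℕ) => if 2 ^ ℓ ≤ x then some ℓ else none :=
    (Primrec.ite
      (PrimrecRel.comp Primrec.nat_le (primrec_pow.comp (Primrec.const 2) Primrec.snd)
        Primrec.fst)
      (Primrec.option_some.comp Primrec.snd) (Primrec.const none)).to₂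
  exact Primrec.nat_sub.comp
    (Primrec.list_length.comp
      (Primrec.listFilterMap (Primrec.list_range.comp Primrec.succ) hg))
    (Primrec.const 1)

/-- length of the `j`-th (shortlex, lengths `≥ L`) binary string -/
def lenIdx (L j : ℕ) : ℕ := logAux (j + 2 ^ L)

/-- the `j`-th (shortlex, lengths `≥ L`) binary string -/
def strOfIdx (L j : ℕ) : List Bool := natToBits (lenIdx L j) (j + 2 ^ L - 2 ^ lenIdx L j)

/-- shortlex index (among strings of length `≥ L`) of the string `y` -/
def posOf (L : ℕ) (y : List Bool) : ℕ := 2 ^ y.length - 2 ^ L + valOf y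

lemma primrec_lenIdx (L : ℕ) : Primrec (lenIdx L) :=
  primrec_logAux.comp (Primrec.nat_add.comp .id (Primrec.const (2 ^ L)))

lemma primrec_strOfIdx (L : ℕ) : Primrec (strOfIdx L) :=
  primrec_natToBits.comp (primrec_lenIdx L)
    (Primrec.nat_sub.comp (Primrec.nat_add.comp .id (Primrec.const (2 ^ L)))
      (primrec_pow.comp (Primrec.const 2) (primrec_lenIdx L)))

lemma lenIdx_posOf {L : ℕ} {y : List Bool} (h : L ≤ y.length) :
    lenIdx L (posOf L y) = y.length := by
  have hpow : 2 ^ L ≤ 2 ^ y.length := Nat.pow_le_pow_right (by norm_num) h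
  have hval : valOf y < 2 ^ y.length := valOf_lt y
  have heq : posOf L y + 2 ^ L = 2 ^ y.length + valOf y := by
    unfold posOf; omega
  unfold lenIdx
  rw [heq]
  exact logAux_spec (by omega) (by rw [pow_succ]; omega)

lemma strOfIdx_posOf {L : ℕ} {y : List Bool} (h : L ≤ y.length) :
    strOfIdx L (posOf L y) = y := by
  have hpow : 2 ^ L ≤ 2 ^ y.length := Nat.pow_le_pow_right (by norm_num) h
  have hval : valOf y < 2 ^ y.length := valOf_lt y
  unfold strOfIdx
  rw [lenIdx_posOf h]
  have : posOf L y + 2 ^ L - 2 ^ y.length = valOf y := by unfold posOf; omega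
  rw [this]; exact natToBits_valOf y

lemma lenIdx_ge (L j : ℕ) : L ≤ lenIdx L j := by
  unfold lenIdx
  rw [logAux_eq_log (by positivity)]
  exact (Nat.le_log_iff_pow_le (by norm_num) (by positivity)).mpr (Nat.le_add_left _ _)

lemma lt_pow_succ_lenIdx (L j : ℕ) : j + 2 ^ L < 2 ^ (lenIdx L j + 1) := by
  unfold lenIdx
  rw [logAux_eq_log (by positivity)]
  exact Nat.lt_pow_succ_log_self (by norm_num) _

/-! ### the greedy injective assignment of fresh low-complexity strings to labels -/

def PassignStep (c : Code) (L k₀ s j : ℕ) (ih : List (List Bool)) : List (List Bool) :=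
  if ih.length = j then
    ih ++ ((kfound c (lenIdx L j + k₀) s).filterMap fun x =>
      if x ∈ ih then none else some x).head?.toList
  else ih

def Passign (c : Code) (L k₀ s : ℕ) : ℕ → List (List Bool)
  | 0 => []
  | j + 1 => PassignStep c L k₀ s j (Passign c L k₀ s j)

lemma primrec_Passign (c : Code) (L k₀ : ℕ) :
    Primrec₂ (fun s j => Passign c L k₀ s j) := by
  have hmem : PrimrecPred fun q : ((ℕ × ℕ) × ℕ × List (List Bool)) × List Bool =>
      q.2 ∈ q.1.2.2 := by
    have h1 : PrimrecPred fun q : ((ℕ × ℕ) × ℕ × List (List Bool)) × List Bool =>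
        (q.1.2.2.findIdx fun z => decide (z = q.2)) < q.1.2.2.length :=
      PrimrecRel.comp Primrec.nat_lt
        (Primrec.list_findIdx (Primrec.snd.comp (Primrec.snd.comp Primrec.fst))
          (PrimrecRel.comp Primrec.eq Primrec.snd (Primrec.snd.comp Primrec.fst)).decide)
        (Primrec.list_length.comp (Primrec.snd.comp (Primrec.snd.comp Primrec.fst)))
    refine h1.of_eq fun q => ?_
    constructor
    · intro h
      have hp := List.findIdx_getElem (w := h)
      simp only [decide_eq_true_eq] at hp
      rw [← hp]
      exact List.getElem_mem _
    · intro h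
      exact List.findIdx_lt_length_of_exists ⟨q.2, h, by simp⟩
  have hg : Primrec₂ fun (p : (ℕ × ℕ) × ℕ × List (List Bool)) (x : List Bool) =>
      if x ∈ p.2.2 then none else some (x : List Bool) :=
    (Primrec.ite hmem (Primrec.const none) (Primrec.option_some.comp Primrec.snd)).to₂
  have hkf : Primrec fun p : (ℕ × ℕ) × ℕ × List (List Bool) =>
      kfound c (lenIdx L p.2.1 + k₀) p.1.1 :=
    (primrec_kfound c).comp
      (Primrec.nat_add.comp ((primrec_lenIdx L).comp (Primrec.fst.comp Primrec.snd))
        (Primrec.const k₀))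
      (Primrec.fst.comp Primrec.fst)
  have hstep : Primrec₂ fun (a : ℕ × ℕ) (q : ℕ × List (List Bool)) =>
      PassignStep c L k₀ a.1 q.1 q.2 := by
    have happ : Primrec fun p : (ℕ × ℕ) × ℕ × List (List Bool) =>
        p.2.2 ++ ((kfound c (lenIdx L p.2.1 + k₀) p.1.1).filterMap fun x =>
          if x ∈ p.2.2 then none else some x).head?.toList :=
      Primrec.list_append.comp (Primrec.snd.comp Primrec.snd)
        (Primrec.optionToList.comp
          (Primrec.list_head?.comp (Primrec.listFilterMap hkf hg)))
    have hguard : PrimrecPred fun p : (ℕ × ℕ) × ℕ × List (List Bool) =>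
        p.2.2.length = p.2.1 :=
      PrimrecRel.comp Primrec.eq
        (Primrec.list_length.comp (Primrec.snd.comp Primrec.snd))
        (Primrec.fst.comp Primrec.snd)
    exact (Primrec.ite hguard happ (Primrec.snd.comp Primrec.snd)).to₂
  have := Primrec.nat_rec' (f := fun a : ℕ × ℕ => a.2)
    (g := fun _ : ℕ × ℕ => ([] : List (List Bool))) Primrec.snd (Primrec.const []) hstep
  exact this.to₂.of_eq fun s j => by
    induction j with
    | zero => rfl
    | succ j ihj => exact congrArg (PassignStep c L k₀ s j) ihj

lemma Passign_length_le (c : Code) (L k₀ s j : ℕ) : (Passign c L k₀ s j).length ≤ j := by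
  induction j with
  | zero => simp [Passign]
  | succ j ih =>
      show (PassignStep c L k₀ s j _).length ≤ j + 1
      unfold PassignStep
      split
      · rcases ho : ((kfound c (lenIdx L j + k₀) s).filterMap fun x =>
          if x ∈ Passign c L k₀ s j then none else some x).head? with _ | a <;>
          simp [ho] <;> omega
      · omega

lemma Passign_prefix_succ (c : Code) (L k₀ s j : ℕ) :
    Passign c L k₀ s j <+: Passign c L k₀ s (j + 1) := by
  show Passign c L k₀ s j <+: PassignStep c L k₀ s j _
  unfold PassignStep
  split
  · exact List.prefix_append _ _
  · exact List.prefix_refl _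

lemma Passign_prefix_mono (c : Code) (L k₀ s : ℕ) {j j' : ℕ} (h : j ≤ j') :
    Passign c L k₀ s j <+: Passign c L k₀ s j' := by
  obtain ⟨d, rfl⟩ := Nat.exists_eq_add_of_le h
  clear h
  induction d with
  | zero => exact List.prefix_refl _
  | succ d ih => exact ih.trans (Passign_prefix_succ c L k₀ s (j + d))

lemma Passign_nodup (c : Code) (L k₀ s j : ℕ) : (Passign c L k₀ s j).Nodup := by
  induction j with
  | zero => simp [Passign]
  | succ j ih =>
      show (PassignStep c L k₀ s j _).Nodup
      unfold PassignStep
      split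
      · rcases ho : ((kfound c (lenIdx L j + k₀) s).filterMap fun x =>
          if x ∈ Passign c L k₀ s j then none else some x).head? with _ | a
        · simpa [ho] using ih
        · have hmem : a ∈ (kfound c (lenIdx L j + k₀) s).filterMap fun x =>
              if x ∈ Passign c L k₀ s j then none else some x :=
            List.mem_of_mem_head? (by rw [ho]; rfl)
          rw [List.mem_filterMap] at hmem
          obtain ⟨x, _, hx⟩ := hmem
          have hanotin : a ∉ Passign c L k₀ s j := by
            by_cases hxm : x ∈ Passign c L k₀ s j
            · simp [hxm] at hx
            · simp [hxm] at hx; subst hx; exact hxm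
          simp [ho, List.nodup_append, ih, hanotin]
          intro b hb hba; exact hanotin (hba ▸ hb)
      · exact ih

lemma findIdx_append_left {α : Type*} (l t : List α) (p : α → Bool)
    (h : l.findIdx p < l.length) : (l ++ t).findIdx p = l.findIdx p := by
  induction l with
  | nil => simp at h
  | cons a l ih =>
      rw [List.cons_append, List.findIdx_cons, List.findIdx_cons]
      cases hpa : p a
      · simp only [cond_false]
        rw [List.findIdx_cons, hpa, cond_false] at h
        simp only [List.length_cons] at h
        rw [ih (by omega)]
      · simp

lemma append_head?_toList_prefix {α : Type*} (l : List α) (f : α → Option α) {K K' : List α}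
    (h : K <+: K') :
    l ++ (K.filterMap f).head?.toList <+: l ++ (K'.filterMap f).head?.toList := by
  obtain ⟨t, rfl⟩ := h
  rw [List.filterMap_append, List.head?_append]
  rcases ho : (K.filterMap f).head? with _ | a
  · rw [Option.none_or]
    simp only [Option.toList_none, List.append_nil]
    exact List.prefix_append _ _
  · rw [show (some a).or ((t.filterMap f).head?) = some a from rfl]

lemma Passign_entry_mem (c : Code) (L k₀ s : ℕ) :
    ∀ {j i : ℕ} {x : List Bool}, (Passign c L k₀ s j)[i]? = some x →
      x ∈ kfound c (lenIdx L i + k₀) s := by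
  intro j
  induction j with
  | zero => intro i x h; simp [Passign] at h
  | succ j ihj =>
      intro i x h
      by_cases hguard : (Passign c L k₀ s j).length = j
      · have hstep : Passign c L k₀ s (j + 1) =
            Passign c L k₀ s j ++ ((kfound c (lenIdx L j + k₀) s).filterMap fun z =>
              if z ∈ Passign c L k₀ s j then none else some z).head?.toList := by
          show PassignStep c L k₀ s j _ = _
          unfold PassignStep
          rw [if_pos hguard]
        rw [hstep] at h
        by_cases hi : i < (Passign c L k₀ s j).length
        · rw [List.getElem?_append] at h
          rw [if_pos hi] at h
          exact ihj h
        · rcases ho : ((kfound c (lenIdx L j + k₀) s).filterMap fun z =>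
              if z ∈ Passign c L k₀ s j then none else some z).head? with _ | a
          · rw [ho] at h
            simp only [Option.toList_none, List.append_nil] at h
            have : i < (Passign c L k₀ s j).length := by
              by_contra hge
              rw [List.getElem?_eq_none (by omega)] at h
              exact nomatch h
            omega
          · rw [ho] at h
            simp only [Option.toList_some] at h
            have hij : i = j := by
              by_contra hne
              have hge : (Passign c L k₀ s j ++ [a]).length ≤ i := by
                rw [List.length_append, List.length_singleton, hguard]
                omega
              rw [List.getElem?_eq_none hge] at h
              exact nomatch h
            subst hij
            have hx : a = x := by
              rw [List.getElem?_append] at h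
              rw [if_neg (by omega)] at h
              rw [hguard] at h
              simp at h
              exact h
            subst hx
            have hmem : a ∈ (kfound c (lenIdx L i + k₀) s).filterMap fun z =>
                if z ∈ Passign c L k₀ s i then none else some z :=
              List.mem_of_mem_head? (by rw [ho]; rfl)
            rw [List.mem_filterMap] at hmem
            obtain ⟨z, hz, hz2⟩ := hmem
            by_cases hzm : z ∈ Passign c L k₀ s i
            · simp [hzm] at hz2
            · simp [hzm] at hz2; subst hz2; exact hz
      · have hstep : Passign c L k₀ s (j + 1) = Passign c L k₀ s j := by
          show PassignStep c L k₀ s j _ = _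
          unfold PassignStep
          rw [if_neg hguard]
        rw [hstep] at h
        exact ihj h

lemma Passign_mono_s (c : Code) (L k₀ : ℕ) {s s' : ℕ} (h : s ≤ s') (j : ℕ) :
    Passign c L k₀ s j <+: Passign c L k₀ s' j := by
  induction j with
  | zero => exact List.prefix_refl _
  | succ j ihj =>
      by_cases hguard : (Passign c L k₀ s j).length = j
      · have heq : Passign c L k₀ s' j = Passign c L k₀ s j := by
          refine ihj.eq_of_length ?_ |>.symm
          have h1 := ihj.length_le
          have h2 := Passign_length_le c L k₀ s' j
          omega
        show PassignStep c L k₀ s j (Passign c L k₀ s j) <+: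
          PassignStep c L k₀ s' j (Passign c L k₀ s' j)
        rw [heq]
        unfold PassignStep
        rw [if_pos hguard, if_pos hguard]
        exact append_head?_toList_prefix _ _ (kfound_mono h)
      · have hstep : Passign c L k₀ s (j + 1) = Passign c L k₀ s j := by
          show PassignStep c L k₀ s j _ = _
          unfold PassignStep
          rw [if_neg hguard]
        rw [hstep]
        exact ihj.trans (Passign_prefix_succ c L k₀ s' j)

lemma Passign_extend (c : Code) (L k₀ : ℕ) {s j : ℕ}
    (hlen : (Passign c L k₀ s j).length = j)
    (hbig : j < (kfound c (lenIdx L j + k₀) s).length) :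
    (Passign c L k₀ s (j + 1)).length = j + 1 := by
  have hex : ∃ x ∈ kfound c (lenIdx L j + k₀) s, x ∉ Passign c L k₀ s j := by
    by_contra hall
    push_neg at hall
    have hsub : (kfound c (lenIdx L j + k₀) s).toFinset ⊆
        (Passign c L k₀ s j).toFinset := by
      intro x hx
      rw [List.mem_toFinset] at hx ⊢
      exact hall x hx
    have h1 : (kfound c (lenIdx L j + k₀) s).toFinset.card =
        (kfound c (lenIdx L j + k₀) s).length :=
      List.toFinset_card_of_nodup (kfound_nodup c _ s)
    have h2 := List.toFinset_card_le (Passign c L k₀ s j)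
    have := Finset.card_le_card hsub
    omega
  obtain ⟨x, hx1, hx2⟩ := hex
  have hne : ((kfound c (lenIdx L j + k₀) s).filterMap fun z =>
      if z ∈ Passign c L k₀ s j then none else some z) ≠ [] := by
    rw [Ne, List.filterMap_eq_nil_iff]
    push_neg
    exact ⟨x, hx1, by simp [hx2]⟩
  show (PassignStep c L k₀ s j _).length = j + 1
  unfold PassignStep
  rw [if_pos hlen]
  rcases ho : ((kfound c (lenIdx L j + k₀) s).filterMap fun z =>
      if z ∈ Passign c L k₀ s j then none else some z).head? with _ | a
  · rw [List.head?_eq_none_iff] at ho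
    exact absurd ho hne
  · simp [ho, hlen]

/-- the recovering partial computable function -/
def recoverFn (c : Code) (L k₀ : ℕ) (x : List Bool) (s : ℕ) : Option (List Bool) :=
  if (Passign c L k₀ s s).findIdx (fun z => decide (z = x)) < (Passign c L k₀ s s).length
  then some (strOfIdx L ((Passign c L k₀ s s).findIdx fun z => decide (z = x)))
  else none

def recover (c : Code) (L k₀ : ℕ) : List Bool →. List Bool :=
  fun x => Nat.rfindOpt (recoverFn c L k₀ x)

lemma partrec_recover (c : Code) (L k₀ : ℕ) : Partrec (recover c L k₀) := by
  have hP : Primrec fun p : List Bool × ℕ => Passign c L k₀ p.2 p.2 :=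
    (primrec_Passign c L k₀).comp Primrec.snd Primrec.snd
  have hidx : Primrec fun p : List Bool × ℕ =>
      (Passign c L k₀ p.2 p.2).findIdx fun z => decide (z = p.1) :=
    Primrec.list_findIdx hP (PrimrecRel.comp Primrec.eq Primrec.snd
      (Primrec.fst.comp Primrec.fst)).decide
  have hin : Primrec₂ (recoverFn c L k₀) :=
    (Primrec.ite
      (PrimrecRel.comp Primrec.nat_lt hidx (Primrec.list_length.comp hP))
      (Primrec.option_some.comp ((primrec_strOfIdx L).comp hidx))
      (Primrec.const none)).to₂
  exact Partrec.rfindOpt hin.to_comp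

lemma prefix_getElem? {α : Type*} {l l' : List α} (h : l <+: l') {i : ℕ} {a : α}
    (hg : l[i]? = some a) : l'[i]? = some a := by
  obtain ⟨t, rfl⟩ := h
  obtain ⟨hi, hget⟩ := List.getElem?_eq_some_iff.mp hg
  rw [List.getElem?_append]
  rw [if_pos hi]
  exact hg

lemma nodup_findIdx_eq {α : Type*} [DecidableEq α] {l : List α} (hnd : l.Nodup) {j : ℕ}
    {x : α} (h : l[j]? = some x) : l.findIdx (fun z => decide (z = x)) = j := by
  obtain ⟨hj, hget⟩ := List.getElem?_eq_some_iff.mp h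
  have hxl : x ∈ l := hget ▸ List.getElem_mem hj
  have hlt : l.findIdx (fun z => decide (z = x)) < l.length :=
    List.findIdx_lt_length_of_exists ⟨x, hxl, by simp⟩
  have h1 : l[l.findIdx (fun z => decide (z = x))] = x := by
    have := List.findIdx_getElem (w := hlt)
    simpa using this
  have h2 : l[l.findIdx (fun z => decide (z = x))]'hlt = l[j]'hj := by rw [h1, hget]
  exact hnd.getElem_inj_iff.mp h2

lemma recoverFn_mono (c : Code) (L k₀ : ℕ) (x : List Bool) :
    ∀ {a : List Bool} {m n : ℕ}, m ≤ n → a ∈ recoverFn c L k₀ x m → a ∈ recoverFn c L k₀ x n := by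
  intro a m n hmn ha
  rw [Option.mem_def] at ha ⊢
  unfold recoverFn at ha ⊢
  split at ha
  case isFalse => exact nomatch ha
  case isTrue hlt =>
    have hpre : Passign c L k₀ m m <+: Passign c L k₀ n n :=
      (Passign_mono_s c L k₀ hmn m).trans (Passign_prefix_mono c L k₀ n hmn)
    obtain ⟨t, htl⟩ := hpre
    have hfind : (Passign c L k₀ n n).findIdx (fun z => decide (z = x)) =
        (Passign c L k₀ m m).findIdx (fun z => decide (z = x)) := by
      rw [← htl]
      exact findIdx_append_left _ _ _ hlt
    have hlen : (Passign c L k₀ m m).length ≤ (Passign c L k₀ n n).length := by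
      rw [← htl]; simp
    rw [if_pos (by omega), hfind]
    exact ha

lemma exists_code_aux (k : List Bool × ℕ → ℕ) (hk : Computable k) :
    ∃ c : Code, ∀ (x : List Bool) (b : ℕ),
      eval c (Nat.pair (Encodable.encode x) b) = Part.some (k (x, b)) := by
  have hpr : Nat.Partrec fun n =>
      (Part.ofOption (Encodable.decode (α := List Bool × ℕ) n)).bind
        fun a => (Part.some (k a)).map Encodable.encode := hk
  obtain ⟨c, hc⟩ := Nat.Partrec.Code.exists_code.mp hpr
  refine ⟨c, fun x b => ?_⟩
  have henc : Nat.pair (Encodable.encode x) b = Encodable.encode (x, b) := by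
    rw [Encodable.encode_prod_val, Encodable.encode_nat]
  rw [hc, henc]
  simp [Encodable.encodek, Encodable.encode_nat]

end AxCompAux

open AxCompAux


/-- Plain Kolmogorov complexity of `x` with respect to decompressor `D`. -/
noncomputable def Kc (D : List Bool →. List Bool) (x : List Bool) : ℕ∞ :=
  sInf {n : ℕ∞ | ∃ p : List Bool, x ∈ D p ∧ (p.length : ℕ∞) = n}

/-- `U` is an optimal decompressor. -/
def OptimalDecompressor (U : List Bool →. List Bool) : Prop :=
  Partrec U ∧ ∀ D : List Bool →. List Bool, Partrec D →
    ∃ c : ℕ, ∀ x : List Bool, Kc U x ≤ Kc D x + (c : ℕ∞)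

/-- `F` is upper semicomputable. -/
def UpperSemicomputable (F : List Bool → ℕ) : Prop :=
  ∃ k : List Bool × ℕ → ℕ, Computable k ∧
    (∀ x n, k (x, n + 1) ≤ k (x, n)) ∧
    (∀ x : List Bool, ∃ N : ℕ, ∀ n ≥ N, k (x, n) = F x)

/-- Axiomatic characterization of complexity: a function satisfying
conservation of information (A1), upper semicomputability (A2) and
calibration (A3) coincides with Kolmogorov complexity up to an additive
constant. -/
theorem axioms_characterize_complexity
    (U : List Bool →. List Bool) (hU : OptimalDecompressor U)
    (K' : List Bool → ℕ)
    (hA1 : ∀ f : List Bool →. List Bool, Partrec f →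
      ∃ c : ℕ, ∀ x y : List Bool, y ∈ f x → K' y ≤ K' x + c)
    (hA2 : UpperSemicomputable K')
    (hA3 : ∃ c C : ℝ, 0 < c ∧ c ≤ C ∧
      (∀ n : ℕ, {x : List Bool | K' x < n}.Finite ∧
        ({x : List Bool | K' x < n}.ncard : ℝ) ≤ C * 2 ^ n) ∧
      (∃ N : ℕ, ∀ n ≥ N, c * 2 ^ n ≤ ({x : List Bool | K' x < n}.ncard : ℝ))) :
    ∃ d : ℕ, ∀ x : List Bool,
      Kc U x ≤ (K' x : ℕ∞) + (d : ℕ∞) ∧ (K' x : ℕ∞) ≤ Kc U x + (d : ℕ∞) := by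
  classical
  obtain ⟨hUpartrec, hUopt⟩ := hU
  obtain ⟨k, hkcomp, hkmono, hklim⟩ := hA2
  -- basic approximation facts
  have hmono : ∀ x a b, a ≤ b → k (x, b) ≤ k (x, a) := by
    intro x a b hab
    obtain ⟨d, rfl⟩ := Nat.exists_eq_add_of_le hab
    clear hab
    induction d with
    | zero => exact le_refl _
    | succ d ih => exact le_trans (hkmono x (a + d)) ih
  have hkK : ∀ x n, K' x ≤ k (x, n) := by
    intro x n
    obtain ⟨N, hN⟩ := hklim x
    rcases le_total n N with h | h
    · rw [← hN N le_rfl]; exact hmono x n N h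
    · rw [← hN n h]
  have hkex : ∀ x n, K' x < n → ∃ b, k (x, b) < n := by
    intro x n h
    obtain ⟨N, hN⟩ := hklim x
    exact ⟨N, by rw [hN N le_rfl]; exact h⟩
  obtain ⟨c, hc⟩ := exists_code_aux k hkcomp
  obtain ⟨cr, Cr, hcr0, hcrC, hupper, N, hlow⟩ := hA3
  -- soundness / completeness of the enumeration w.r.t. K'
  have hsound : ∀ {n s : ℕ} {x : List Bool}, x ∈ kfound c n s → K' x < n := by
    intro n s x hx
    obtain ⟨b, hb⟩ := kfound_sound hc hx
    exact lt_of_le_of_lt (hkK x b) hb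
  have hcompl : ∀ {n : ℕ} {x : List Bool}, K' x < n → ∃ s, x ∈ kfound c n s := by
    intro n x h
    obtain ⟨b, hb⟩ := hkex x n h
    exact kfound_complete hc hb
  have hlen_le : ∀ n s : ℕ, (kfound c n s).length ≤ {x : List Bool | K' x < n}.ncard := by
    intro n s
    have hfin := (hupper n).1
    have hsub : (kfound c n s).toFinset ⊆ hfin.toFinset := by
      intro x hx
      rw [List.mem_toFinset] at hx
      rw [Set.Finite.mem_toFinset]
      exact hsound hx
    calc (kfound c n s).length = (kfound c n s).toFinset.card :=
          (List.toFinset_card_of_nodup (kfound_nodup c n s)).symm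
      _ ≤ hfin.toFinset.card := Finset.card_le_card hsub
      _ = {x : List Bool | K' x < n}.ncard := (Set.ncard_eq_toFinset_card _ hfin).symm
  have hbig : ∀ (n q : ℕ), q ≤ {x : List Bool | K' x < n}.ncard →
      ∃ s, q ≤ (kfound c n s).length := by
    intro n q hq
    have hfin := (hupper n).1
    have hstage : ∀ F : Finset (List Bool), ↑F ⊆ {x : List Bool | K' x < n} →
        ∃ s, ∀ x ∈ F, x ∈ kfound c n s := by
      intro F
      induction F using Finset.induction_on with
      | empty => exact fun _ => ⟨0, by simp⟩
      | insert _ _ hnotin ih =>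
          rename_i a F'
          intro hsub
          obtain ⟨s₁, hs₁⟩ := ih (by
            intro z hz
            exact hsub (by simp [hz]))
          obtain ⟨s₂, hs₂⟩ := hcompl (hsub (by simp) : K' a < n)
          refine ⟨max s₁ s₂, ?_⟩
          intro x hx
          rcases Finset.mem_insert.mp hx with rfl | hx'
          · exact (kfound_mono (le_max_right s₁ s₂)).subset hs₂
          · exact (kfound_mono (le_max_left s₁ s₂)).subset (hs₁ x hx')
    obtain ⟨s, hs⟩ := hstage hfin.toFinset (by simp [Set.Finite.coe_toFinset])
    refine ⟨s, ?_⟩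
    have hsub2 : hfin.toFinset ⊆ (kfound c n s).toFinset := by
      intro x hx
      rw [List.mem_toFinset]
      exact hs x hx
    have h1 := Finset.card_le_card hsub2
    rw [List.toFinset_card_of_nodup (kfound_nodup c n s)] at h1
    rw [← Set.ncard_eq_toFinset_card _ hfin] at h1
    omega
  ---------------------------------------------------------------
  -- Direction 1 : Kc U x ≤ K' x + O(1)
  set m₁ := ⌈Cr⌉₊ with hm₁def
  have hcard_nat : ∀ n : ℕ, {x : List Bool | K' x < n}.ncard ≤ 2 ^ (n + m₁) := by
    intro n
    have h1 : ({x : List Bool | K' x < n}.ncard : ℝ) ≤ Cr * 2 ^ n := (hupper n).2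
    have h2 : Cr ≤ (2 : ℝ) ^ m₁ := by
      calc Cr ≤ (m₁ : ℝ) := Nat.le_ceil Cr
        _ ≤ 2 ^ m₁ := by exact_mod_cast (Nat.lt_two_pow_self (n := m₁)).le
    have h3 : ({x : List Bool | K' x < n}.ncard : ℝ) ≤ 2 ^ (n + m₁) := by
      calc ({x : List Bool | K' x < n}.ncard : ℝ) ≤ Cr * 2 ^ n := h1
        _ ≤ 2 ^ m₁ * 2 ^ n := mul_le_mul_of_nonneg_right h2 (by positivity)
        _ = 2 ^ (n + m₁) := by rw [← pow_add]; ring_nf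
    exact_mod_cast h3
  obtain ⟨c₁, hc₁⟩ := hUopt (decomp c m₁) (partrec_decomp c m₁)
  have hdir1 : ∀ x : List Bool, Kc U x ≤ (K' x : ℕ∞) + ((1 + m₁ + c₁ : ℕ) : ℕ∞) := by
    intro x
    obtain ⟨s₀, hs₀⟩ := hcompl (Nat.lt_succ_self (K' x))
    set n := K' x + 1 with hndef
    set i := (kfound c n s₀).findIdx (fun z => decide (z = x)) with hidef
    have hilt : i < (kfound c n s₀).length :=
      List.findIdx_lt_length_of_exists ⟨x, hs₀, by simp⟩
    have hgeti : (kfound c n s₀)[i]? = some x := by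
      rw [List.getElem?_eq_some_iff]
      refine ⟨hilt, ?_⟩
      have := List.findIdx_getElem (w := hilt)
      simpa using this
    have hi2 : i < 2 ^ (n + m₁) :=
      lt_of_lt_of_le hilt (le_trans (hlen_le n s₀) (hcard_nat n))
    set p := natToBits (n + m₁) i with hpdef
    have hplen : p.length = n + m₁ := length_natToBits _ _
    have hval : valOf p = i := valOf_natToBits hi2
    have hxD : x ∈ decomp c m₁ p := by
      show x ∈ Nat.rfindOpt fun s => (kfound c (p.length - m₁) s)[valOf p]?
      rw [Nat.rfindOpt_mono]
      · refine ⟨s₀, ?_⟩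
        show (kfound c (p.length - m₁) s₀)[valOf p]? = some x
        rw [hplen, hval, Nat.add_sub_cancel]
        exact hgeti
      · intro a m' n' hmn ham
        rw [Option.mem_def] at ham ⊢
        exact prefix_getElem? (kfound_mono hmn) ham
    have hKcD : Kc (decomp c m₁) x ≤ ((n + m₁ : ℕ) : ℕ∞) :=
      sInf_le ⟨p, hxD, by rw [hplen]⟩
    calc Kc U x ≤ Kc (decomp c m₁) x + (c₁ : ℕ∞) := hc₁ x
      _ ≤ ((n + m₁ : ℕ) : ℕ∞) + (c₁ : ℕ∞) := add_le_add_left hKcD _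
      _ = (K' x : ℕ∞) + ((1 + m₁ + c₁ : ℕ) : ℕ∞) := by
          rw [hndef]; push_cast; ring
  ---------------------------------------------------------------
  -- Direction 2 : K' x ≤ Kc U x + O(1)
  set k₀ := ⌈(2 : ℝ) / cr⌉₊ with hk₀def
  have hk₀ : (2 : ℝ) ≤ cr * 2 ^ k₀ := by
    have h1 : (2 : ℝ) / cr ≤ (k₀ : ℝ) := Nat.le_ceil _
    have h2 : (k₀ : ℝ) ≤ 2 ^ k₀ := by exact_mod_cast (Nat.lt_two_pow_self (n := k₀)).le
    calc (2 : ℝ) = cr * (2 / cr) := by field_simp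
      _ ≤ cr * 2 ^ k₀ := mul_le_mul_of_nonneg_left (h1.trans h2) hcr0.le
  have hBigCard : ∀ j : ℕ, j + 1 ≤ {x : List Bool | K' x < lenIdx N j + k₀}.ncard := by
    intro j
    have hlenN : N ≤ lenIdx N j := lenIdx_ge N j
    have h2 := hlow (lenIdx N j + k₀) (by omega)
    have h1 : (2 : ℝ) ^ (lenIdx N j + 1) ≤ cr * 2 ^ (lenIdx N j + k₀) := by
      rw [pow_add, pow_add]
      calc (2:ℝ) ^ lenIdx N j * 2 ^ 1 = 2 ^ lenIdx N j * 2 := by norm_num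
        _ ≤ 2 ^ lenIdx N j * (cr * 2 ^ k₀) :=
            mul_le_mul_of_nonneg_left hk₀ (by positivity)
        _ = cr * (2 ^ lenIdx N j * 2 ^ k₀) := by ring
    have h3 : (j : ℝ) + 1 ≤ 2 ^ (lenIdx N j + 1) := by
      have h4 := lt_pow_succ_lenIdx N j
      have h5 : (1:ℕ) ≤ 2 ^ N := Nat.one_le_two_pow
      have h6 : j + 1 ≤ 2 ^ (lenIdx N j + 1) := by omega
      exact_mod_cast h6
    have := (h3.trans h1).trans h2
    exact_mod_cast this
  have hPcomplete : ∀ j : ℕ, ∃ s, (Passign c N k₀ s j).length = j := by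
    intro j
    induction j with
    | zero => exact ⟨0, rfl⟩
    | succ j ih =>
        obtain ⟨s₁, hs₁⟩ := ih
        obtain ⟨s₂, hs₂⟩ := hbig (lenIdx N j + k₀) (j + 1) (hBigCard j)
        refine ⟨max s₁ s₂, ?_⟩
        have hP1 : (Passign c N k₀ (max s₁ s₂) j).length = j := by
          have hpre := (Passign_mono_s c N k₀ (le_max_left s₁ s₂) j).length_le
          have := Passign_length_le c N k₀ (max s₁ s₂) j
          omega
        apply Passign_extend c N k₀ hP1
        have := (kfound_mono (c := c) (n := lenIdx N j + k₀) (le_max_right s₁ s₂)).length_le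
        omega
  obtain ⟨cf, hcf⟩ := hA1 (recover c N k₀) (partrec_recover c N k₀)
  have hrecover : ∀ y : List Bool, N ≤ y.length → K' y ≤ y.length + k₀ + cf := by
    intro y hy
    set j := posOf N y with hjdef
    obtain ⟨s₁, hs₁⟩ := hPcomplete (j + 1)
    set s := max s₁ (j + 1) with hsdef
    have hs : (Passign c N k₀ s (j + 1)).length = j + 1 := by
      rw [hsdef]
      have hpre := (Passign_mono_s c N k₀ (le_max_left s₁ (j + 1)) (j + 1)).length_le
      have := Passign_length_le c N k₀ (max s₁ (j + 1)) (j + 1)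
      omega
    have hgetx : ∃ x : List Bool, (Passign c N k₀ s (j + 1))[j]? = some x := by
      have hj : j < (Passign c N k₀ s (j + 1)).length := by omega
      exact ⟨_, List.getElem?_eq_getElem hj⟩
    obtain ⟨x, hx⟩ := hgetx
    have hKx : K' x < lenIdx N j + k₀ := hsound (Passign_entry_mem c N k₀ s hx)
    rw [hjdef, lenIdx_posOf hy] at hKx
    have hgets : (Passign c N k₀ s s)[j]? = some x :=
      prefix_getElem? (Passign_prefix_mono c N k₀ s (le_max_right s₁ (j + 1))) hx
    have hyx : y ∈ recover c N k₀ x := by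
      show y ∈ Nat.rfindOpt (recoverFn c N k₀ x)
      rw [Nat.rfindOpt_mono (fun {a m' n'} => recoverFn_mono c N k₀ x)]
      refine ⟨s, ?_⟩
      show recoverFn c N k₀ x s = some y
      have hfind : (Passign c N k₀ s s).findIdx (fun z => decide (z = x)) = j :=
        nodup_findIdx_eq (Passign_nodup c N k₀ s s) hgets
      have hjlt : j < (Passign c N k₀ s s).length := by
        obtain ⟨hjl, _⟩ := List.getElem?_eq_some_iff.mp hgets
        exact hjl
      unfold recoverFn
      rw [hfind, if_pos hjlt]
      rw [hjdef, strOfIdx_posOf hy]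
    have := hcf x y hyx
    omega
  -- short strings
  set B := (List.finite_length_lt Bool N).toFinset with hBdef
  set b₀ := B.sup K' with hb₀def
  have hshort : ∀ y : List Bool, y.length < N → K' y ≤ b₀ := by
    intro y hy
    exact Finset.le_sup (by rw [hBdef, Set.Finite.mem_toFinset]; exact hy)
  have hlenbound : ∀ y : List Bool, K' y ≤ y.length + (k₀ + cf + b₀) := by
    intro y
    rcases lt_or_ge y.length N with h | h
    · have := hshort y h; omega
    · have := hrecover y h; omega
  obtain ⟨cU, hcU⟩ := hA1 U hUpartrec
  set d₂ := k₀ + cf + b₀ + cU with hd₂def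
  have hdir2 : ∀ x : List Bool, (K' x : ℕ∞) ≤ Kc U x + ((d₂ : ℕ) : ℕ∞) := by
    intro x
    by_cases hKc : Kc U x = ⊤
    · rw [hKc, top_add]
      exact le_top
    · have hne : {n : ℕ∞ | ∃ p : List Bool, x ∈ U p ∧ (p.length : ℕ∞) = n}.Nonempty := by
        by_contra h
        rw [Set.not_nonempty_iff_eq_empty] at h
        apply hKc
        show sInf _ = ⊤
        rw [h, sInf_empty]
      obtain ⟨_, p0, hp0, rfl⟩ := hne
      set T := {m : ℕ | ∃ p : List Bool, x ∈ U p ∧ p.length = m} with hTdef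
      have hTne : T.Nonempty := ⟨p0.length, p0, hp0, rfl⟩
      obtain ⟨p, hp, hplen⟩ := Nat.sInf_mem hTne
      have h1 : K' x ≤ p.length + d₂ := by
        have h2 := hcU p x hp
        have h3 := hlenbound p
        omega
      have h2 : ((p.length : ℕ) : ℕ∞) ≤ Kc U x := by
        apply le_sInf
        rintro b ⟨q, hq, rfl⟩
        have h3 : sInf T ≤ q.length := Nat.sInf_le ⟨q, hq, rfl⟩
        have h4 : p.length ≤ q.length := by omega
        exact_mod_cast h4
      calc (K' x : ℕ∞) ≤ ((p.length + d₂ : ℕ) : ℕ∞) := by exact_mod_cast h1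
        _ = ((p.length : ℕ) : ℕ∞) + ((d₂ : ℕ) : ℕ∞) := by push_cast; ring
        _ ≤ Kc U x + ((d₂ : ℕ) : ℕ∞) := add_le_add_left h2 _
  ---------------------------------------------------------------
  refine ⟨max (1 + m₁ + c₁) d₂, fun x => ⟨?_, ?_⟩⟩
  · refine (hdir1 x).trans (add_le_add_right ?_ _)
    exact_mod_cast Nat.le_max_left (1 + m₁ + c₁) d₂
  · refine (hdir2 x).trans (add_le_add_right ?_ _)
    exact_mod_cast Nat.le_max_right (1 + m₁ + c₁) d₂
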